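/- If ν is a random variable with P[ν = n] = e^{−t}(1 − e^{−t})^{n−1} for n = 1, 2, …, and conditionally on ν = n and on a tree/angle structure the coefficients (π_{1,n}, …, π_{n,n}) satisfy the recursive cosine/sine construction with i.i.d. angles φ_k distributed according to a probability measure β on [0, π], then for every s > 0, E_t[Σ_{j=1}^ν |π_{j,ν}|^s] = exp(−(1 − 2 l_s) t), where l_s := ∫_0^π (sin φ)^s β(dφ). -/

import Mathlib

open MeasureTheory Real

/-- McKean binary trees. -/
inductive MTree where
  | leaf : MTree
  | node (l r : MTree) : MTree

/-- Number of leaves of a McKean tree. -/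
def MTree.leaves : MTree → ℕ
  | .leaf => 1
  | .node l r => l.leaves + r.leaves

/-- The weight `p_n(t_n)` of a McKean tree (the marginal law of the germination
Markov chain). -/
noncomputable def MTree.weight : MTree → ℝ
  | .leaf => 1
  | .node l r => (1 / ((MTree.node l r).leaves - 1 : ℝ)) * l.weight * r.weight

/-- The recursive coefficients `π*_{j,n}(t_n, φ)` (with `j` and the angles
`0`-indexed). -/
noncomputable def MTree.piStar : MTree → (ℕ → ℝ) → ℕ → ℝ
  | .leaf, _, _ => 1
  | .node l r, φ, j =>
      if j < l.leaves then
        l.piStar φ j * Real.cos (φ ((MTree.node l r).leaves - 2))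
      else
        r.piStar (fun i => φ (i + (l.leaves - 1))) (j - l.leaves) *
          Real.sin (φ ((MTree.node l r).leaves - 2))

namespace MTree

lemma one_le_leaves : ∀ tr : MTree, 1 ≤ tr.leaves
  | .leaf => le_refl _
  | .node a b => by simp [leaves]; have := one_le_leaves a; omega

/-- The equivalence decomposing trees with `m+2` leaves. -/
def nodeEquiv (m : ℕ) :
    {tr : MTree // tr.leaves = m + 2} ≃
      Σ k : Fin (m + 1), {a : MTree // a.leaves = (k : ℕ) + 1} ×
        {b : MTree // b.leaves = (m - (k : ℕ)) + 1} where
  toFun := fun x =>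
    match x with
    | ⟨.leaf, h⟩ => absurd h (by simp [leaves])
    | ⟨.node a b, h⟩ =>
        ⟨⟨a.leaves - 1, by
          have ha := one_le_leaves a; have hb := one_le_leaves b
          simp only [leaves] at h; omega⟩,
         ⟨a, by show a.leaves = a.leaves - 1 + 1; have ha := one_le_leaves a; omega⟩,
         ⟨b, by
          have ha := one_le_leaves a; have hb := one_le_leaves b
          show b.leaves = m - (a.leaves - 1) + 1
          simp only [leaves] at h; omega⟩⟩
  invFun := fun ⟨k, ⟨a, ha⟩, ⟨b, hb⟩⟩ =>
    ⟨.node a b, by have hk := k.isLt; simp only [leaves, ha, hb]; omega⟩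
  left_inv := fun x => by
    obtain ⟨tr, h⟩ := x
    cases tr with
    | leaf => exact absurd h (by simp [leaves])
    | node a b => rfl
  right_inv := fun x => by
    obtain ⟨⟨kv, hk⟩, ⟨a, ha⟩, ⟨b, hb⟩⟩ := x
    simp only [Fin.val_mk] at ha hb
    have h2 : kv = a.leaves - 1 := by omega
    subst h2
    rfl

lemma finite_aux : ∀ m : ℕ, Finite {tr : MTree // tr.leaves = m + 1} := by
  intro m
  induction m using Nat.strong_induction_on with
  | _ m ih =>
    match m with
    | 0 =>
      have : ∀ x : {tr : MTree // tr.leaves = 1}, x = ⟨.leaf, rfl⟩ := by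
        rintro ⟨tr, h⟩
        cases tr with
        | leaf => rfl
        | node a b =>
          have := one_le_leaves a; have := one_le_leaves b
          simp only [leaves] at h; omega
      haveI : Subsingleton {tr : MTree // tr.leaves = 1} :=
        ⟨fun a b => (this a).trans (this b).symm⟩
      exact Finite.of_subsingleton
    | (m + 1) =>
      haveI : ∀ k : Fin (m + 1), Finite {a : MTree // a.leaves = (k : ℕ) + 1} :=
        fun k => ih k (by omega)
      haveI : ∀ k : Fin (m + 1), Finite {b : MTree // b.leaves = (m - (k : ℕ)) + 1} :=
        fun k => ih (m - k) (by omega)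
      exact Finite.of_equiv _ (nodeEquiv m).symm

instance (n : ℕ) : Finite {tr : MTree // tr.leaves = n + 1} := finite_aux n

end MTree

namespace MTree

/-- expected value of `Σ_j |π_j|^s` given the tree. -/
noncomputable def esum (c : ℝ) : MTree → ℝ
  | .leaf => 1
  | .node a b => c * (esum c a + esum c b)

noncomputable def Wsum (m : ℕ) : ℝ :=
  ∑' tr : {tr : MTree // tr.leaves = m + 1}, (tr : MTree).weight

noncomputable def Tsum (c : ℝ) (m : ℕ) : ℝ :=
  ∑' tr : {tr : MTree // tr.leaves = m + 1}, (tr : MTree).weight * esum c (tr : MTree)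

/-- closed form `∏_{j<m} (2c+j)/(j+1)`. -/
noncomputable def Scl (c : ℝ) (m : ℕ) : ℝ :=
  ∏ j ∈ Finset.range m, (2 * c + j) / (j + 1)

lemma tsum_struct (g : MTree → ℝ) (m : ℕ) :
    ∑' tr : {tr : MTree // tr.leaves = m + 2}, g (tr : MTree) =
      (∑ k ∈ Finset.range (m + 1),
        (∑' a : {a : MTree // a.leaves = k + 1},
          ∑' b : {b : MTree // b.leaves = (m - k) + 1},
            g (MTree.node (a : MTree) (b : MTree)))) := by
  rw [← Equiv.tsum_eq (nodeEquiv m).symm (fun tr => g (tr : MTree))]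
  rw [Summable.tsum_sigma (Summable.of_finite)]
  rw [tsum_fintype, ← Fin.sum_univ_eq_sum_range
    (fun k => ∑' a : {a : MTree // a.leaves = k + 1},
      ∑' b : {b : MTree // b.leaves = (m - k) + 1}, g (MTree.node (a : MTree) (b : MTree)))]
  refine Finset.sum_congr rfl fun k _ => ?_
  rw [Summable.tsum_prod (Summable.of_finite)]
  rfl

lemma weight_node (a b : MTree) (m : ℕ) (h : a.leaves + b.leaves = m + 2) :
    (MTree.node a b).weight = (1 / (m + 1 : ℝ)) * a.weight * b.weight := by
  show (1 / ((MTree.node a b).leaves - 1 : ℝ)) * a.weight * b.weight = _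
  have : ((MTree.node a b).leaves : ℝ) = (m + 2 : ℕ) := by
    simp only [leaves] at h ⊢; exact_mod_cast congrArg (Nat.cast : ℕ → ℝ) h
  rw [this]
  push_cast
  ring_nf

lemma Wsum_zero : Wsum 0 = 1 := by
  unfold Wsum
  rw [tsum_eq_single (⟨.leaf, rfl⟩ : {tr : MTree // tr.leaves = 1})]
  · rfl
  · intro b' hb'
    exfalso; apply hb'
    obtain ⟨tr, h⟩ := b'
    cases tr with
    | leaf => rfl
    | node a b =>
      have := one_le_leaves a; have := one_le_leaves b
      simp only [leaves] at h; omega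

lemma Tsum_zero (c : ℝ) : Tsum c 0 = 1 := by
  unfold Tsum
  rw [tsum_eq_single (⟨.leaf, rfl⟩ : {tr : MTree // tr.leaves = 1})]
  · show (MTree.leaf.weight) * esum c .leaf = 1
    simp [weight, esum]
  · intro b' hb'
    exfalso; apply hb'
    obtain ⟨tr, h⟩ := b'
    cases tr with
    | leaf => rfl
    | node a b =>
      have := one_le_leaves a; have := one_le_leaves b
      simp only [leaves] at h; omega

lemma Wsum_succ (m : ℕ) :
    Wsum (m + 1) = (1 / (m + 1 : ℝ)) * ∑ k ∈ Finset.range (m + 1), Wsum k * Wsum (m - k) := by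
  unfold Wsum
  rw [tsum_struct (fun tr => tr.weight) m]
  rw [Finset.mul_sum]
  refine Finset.sum_congr rfl fun k hk => ?_
  haveI : ∀ k : ℕ, Fintype {a : MTree // a.leaves = k + 1} := fun k => Fintype.ofFinite _
  simp only [tsum_fintype]
  have : ∀ (a : {a : MTree // a.leaves = k + 1}) (b : {b : MTree // b.leaves = (m - k) + 1}),
      (MTree.node (a : MTree) (b : MTree)).weight
        = (1 / (m + 1 : ℝ)) * (a : MTree).weight * (b : MTree).weight := by
    rintro ⟨a, ha⟩ ⟨b, hb⟩
    refine weight_node a b m ?_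
    have hk' := Finset.mem_range.1 hk
    omega
  simp only [this]
  rw [Finset.sum_mul_sum, Finset.mul_sum]
  refine Finset.sum_congr rfl fun a _ => ?_
  rw [Finset.mul_sum]
  refine Finset.sum_congr rfl fun b _ => ?_
  ring


lemma Tsum_succ (c : ℝ) (m : ℕ) :
    Tsum c (m + 1) = (c / (m + 1 : ℝ)) *
      ∑ k ∈ Finset.range (m + 1), (Tsum c k * Wsum (m - k) + Wsum k * Tsum c (m - k)) := by
  unfold Tsum
  rw [tsum_struct (fun tr => tr.weight * esum c tr) m]
  rw [Finset.mul_sum]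
  refine Finset.sum_congr rfl fun k hk => ?_
  haveI : ∀ k : ℕ, Fintype {a : MTree // a.leaves = k + 1} := fun k => Fintype.ofFinite _
  simp only [tsum_fintype]
  have hW : ∀ (a : {a : MTree // a.leaves = k + 1}) (b : {b : MTree // b.leaves = (m - k) + 1}),
      (MTree.node (a : MTree) (b : MTree)).weight * esum c (MTree.node (a : MTree) (b : MTree))
        = (1 / (m + 1 : ℝ)) * (a : MTree).weight * (b : MTree).weight *
            (c * (esum c (a : MTree) + esum c (b : MTree))) := by
    rintro ⟨a, ha⟩ ⟨b, hb⟩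
    have hk' := Finset.mem_range.1 hk
    rw [weight_node a b m (by omega)]
    rfl
  simp only [hW]
  have h1 : Wsum (m - k) = ∑ b : {b : MTree // b.leaves = (m - k) + 1}, (b : MTree).weight := by
    unfold Wsum; rw [tsum_fintype]
  have h2 : Wsum k = ∑ a : {a : MTree // a.leaves = k + 1}, (a : MTree).weight := by
    unfold Wsum; rw [tsum_fintype]
  rw [h1, h2]
  rw [mul_add, Finset.sum_mul_sum, Finset.sum_mul_sum]
  rw [Finset.mul_sum, Finset.mul_sum, ← Finset.sum_add_distrib]
  refine Finset.sum_congr rfl fun a _ => ?_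
  rw [Finset.mul_sum, Finset.mul_sum, ← Finset.sum_add_distrib]
  refine Finset.sum_congr rfl fun b _ => ?_
  ring

lemma Wsum_eq_one : ∀ m : ℕ, Wsum m = 1 := by
  intro m
  induction m using Nat.strong_induction_on with
  | _ m ih =>
    match m with
    | 0 => exact Wsum_zero
    | (m + 1) =>
      rw [Wsum_succ]
      have : ∀ k ∈ Finset.range (m + 1), Wsum k * Wsum (m - k) = 1 := by
        intro k hk
        have hk' := Finset.mem_range.1 hk
        rw [ih k (by omega), ih (m - k) (by omega), one_mul]
      rw [Finset.sum_congr rfl this, Finset.sum_const, Finset.card_range]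
      have h1 : ((m : ℝ) + 1) ≠ 0 := by positivity
      field_simp
      simp

lemma Scl_zero (c : ℝ) : Scl c 0 = 1 := by simp [Scl]

lemma Scl_succ (c : ℝ) (m : ℕ) :
    Scl c (m + 1) = Scl c m * ((2 * c + m) / (m + 1)) := by
  rw [Scl, Finset.prod_range_succ]; rfl

lemma Scl_rec (c : ℝ) (m : ℕ) :
    ((m : ℝ) + 1) * Scl c (m + 1) = 2 * c * ∑ k ∈ Finset.range (m + 1), Scl c k := by
  induction m with
  | zero => simp [Scl_succ, Scl_zero]
  | succ m ih =>
    rw [Finset.sum_range_succ, mul_add, ← ih]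
    rw [Scl_succ c (m + 1)]
    have h1 : ((m : ℝ) + 1 + 1) ≠ 0 := by positivity
    field_simp
    push_cast
    ring

lemma Tsum_eq_Scl (c : ℝ) : ∀ m : ℕ, Tsum c m = Scl c m := by
  intro m
  induction m using Nat.strong_induction_on with
  | _ m ih =>
    match m with
    | 0 => rw [Tsum_zero, Scl_zero]
    | (m + 1) =>
      rw [Tsum_succ]
      have : ∀ k ∈ Finset.range (m + 1),
          Tsum c k * Wsum (m - k) + Wsum k * Tsum c (m - k) = Scl c k + Scl c (m - k) := by
        intro k hk
        have hk' := Finset.mem_range.1 hk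
        rw [Wsum_eq_one, Wsum_eq_one, ih k (by omega), ih (m - k) (by omega)]
        ring
      rw [Finset.sum_congr rfl this, Finset.sum_add_distrib]
      have hrefl : ∑ k ∈ Finset.range (m + 1), Scl c (m - k)
          = ∑ k ∈ Finset.range (m + 1), Scl c k := by
        have := Finset.sum_range_reflect (fun k => Scl c k) (m + 1)
        simpa using this
      rw [hrefl]
      have h1 : ((m : ℝ) + 1) ≠ 0 := by positivity
      have := Scl_rec c m
      field_simp
      nlinarith [this]

end MTree

namespace MTree

lemma Scl_nonneg (c : ℝ) (hc : 0 ≤ c) (n : ℕ) : 0 ≤ Scl c n :=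
  Finset.prod_nonneg fun j _ => div_nonneg (by positivity) (by positivity)

lemma Scl_le (c : ℝ) (hc0 : 0 ≤ c) (hc1 : c ≤ 1) : ∀ n : ℕ, Scl c n ≤ (n : ℝ) + 1
  | 0 => by simp [Scl_zero]
  | (n+1) => by
      rw [Scl_succ]
      have hn : (0:ℝ) < (n:ℝ) + 1 := by positivity
      have h1 : (2*c + n)/((n:ℝ)+1) ≤ ((n:ℝ)+2)/((n:ℝ)+1) :=
        (div_le_div_iff_of_pos_right hn).2 (by linarith)
      calc Scl c n * ((2*c + n)/((n:ℝ)+1)) ≤ ((n:ℝ)+1) * (((n:ℝ)+2)/((n:ℝ)+1)) := by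
            apply mul_le_mul (Scl_le c hc0 hc1 n) h1
              (div_nonneg (by positivity) (by positivity)) (by positivity)
        _ = (n:ℝ) + 2 := by field_simp
        _ = ((n:ℕ)+1 : ℕ) + 1 := by push_cast; ring

lemma summable_sq_geom {r : ℝ} (h : |r| < 1) :
    Summable (fun n : ℕ => ((n:ℝ)+1)^2 * r^n) := by
  have hr : ‖r‖ < 1 := h
  have s2 := summable_pow_mul_geometric_of_norm_lt_one (R := ℝ) 2 hr
  have s1 := summable_pow_mul_geometric_of_norm_lt_one (R := ℝ) 1 hr
  have s0 := summable_pow_mul_geometric_of_norm_lt_one (R := ℝ) 0 hr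
  have := (s2.add (s1.mul_left 2)).add s0
  refine this.congr fun n => ?_
  push_cast
  ring

lemma summable_Scl_pow (c : ℝ) (hc0 : 0 ≤ c) (hc1 : c ≤ 1) {y : ℝ} (hy : |y| < 1) :
    Summable (fun n : ℕ => Scl c n * y ^ n) := by
  refine Summable.of_norm_bounded (g := fun n : ℕ => ((n:ℝ)+1)^2 * |y|^n) (summable_sq_geom (by simpa)) ?_
  intro n
  rw [Real.norm_eq_abs, abs_mul, abs_pow, abs_of_nonneg (Scl_nonneg c hc0 n)]
  apply mul_le_mul _ le_rfl (by positivity) (by positivity)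
  calc Scl c n ≤ (n:ℝ) + 1 := Scl_le c hc0 hc1 n
    _ ≤ ((n:ℝ)+1)^2 := by nlinarith [Nat.cast_nonneg (α := ℝ) n]

lemma summable_n_Scl_pow (c : ℝ) (hc0 : 0 ≤ c) (hc1 : c ≤ 1) {y : ℝ} (hy : |y| < 1) :
    Summable (fun n : ℕ => (n : ℝ) * Scl c n * y ^ n) := by
  refine Summable.of_norm_bounded (g := fun n : ℕ => ((n:ℝ)+1)^2 * ((n:ℝ)+1) * |y|^n) ?_ ?_
  · have : Summable (fun n : ℕ => ((n:ℝ)+1)^3 * |y|^n) := by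
      have hr : ‖|y|‖ < 1 := by simpa
      have s3 := summable_pow_mul_geometric_of_norm_lt_one (R := ℝ) 3 hr
      have s2 := summable_pow_mul_geometric_of_norm_lt_one (R := ℝ) 2 hr
      have s1 := summable_pow_mul_geometric_of_norm_lt_one (R := ℝ) 1 hr
      have s0 := summable_pow_mul_geometric_of_norm_lt_one (R := ℝ) 0 hr
      have := ((s3.add (s2.mul_left 3)).add (s1.mul_left 3)).add s0
      refine this.congr fun n => ?_
      push_cast
      ring
    refine this.congr fun n => by ring
  · intro n
    rw [Real.norm_eq_abs, abs_mul, abs_mul, abs_pow, abs_of_nonneg (Scl_nonneg c hc0 n),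
      abs_of_nonneg (Nat.cast_nonneg n)]
    have h1 : (n:ℝ) ≤ ((n:ℝ)+1)^2 := by nlinarith [Nat.cast_nonneg (α := ℝ) n]
    have h2 : Scl c n ≤ (n:ℝ) + 1 := Scl_le c hc0 hc1 n
    have := Nat.cast_nonneg (α := ℝ) n
    apply mul_le_mul _ le_rfl (by positivity) (by positivity)
    nlinarith [Scl_nonneg c hc0 n]

/-- The binomial series `∑ Scl c n x^n = (1-x)^(-2c)`. -/
lemma hasSum_Scl (c : ℝ) (hc0 : 0 ≤ c) (hc1 : c ≤ 1) (x : ℝ) (hx0 : 0 ≤ x) (hx1 : x < 1) :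
    HasSum (fun n : ℕ => Scl c n * x ^ n) ((1 - x) ^ (-(2*c)) : ℝ) := by
  set a : ℝ := 2 * c with ha
  set r : ℝ := (1 + x) / 2 with hr
  have hr0 : 0 < r := by rw [hr]; linarith
  have hr1 : r < 1 := by rw [hr]; linarith
  have hxr : x < r := by rw [hr]; linarith
  set f : ℝ → ℝ := fun y => ∑' n : ℕ, Scl c n * y ^ n with hf
  set f' : ℝ → ℝ := fun y => ∑' n : ℕ, Scl c n * ((n : ℝ) * y ^ (n - 1)) with hf'
  -- derivative of f on Ioo (-r) r
  have hderiv : ∀ y ∈ Set.Ioo (-r) r, HasDerivAt f (f' y) y := by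
    intro y hy
    refine hasDerivAt_tsum_of_isPreconnected
      (u := fun n : ℕ => ((n:ℝ)+1)^2 * ((n:ℝ)+1) / r * r ^ n)
      ?_ isOpen_Ioo (convex_Ioo _ _).isPreconnected
      (g := fun n y => Scl c n * y ^ n) (g' := fun n y => Scl c n * ((n : ℝ) * y ^ (n - 1)))
      ?_ ?_ (Set.mem_Ioo.2 ⟨by linarith, hr0⟩) ?_ hy
    · have := summable_sq_geom (r := r) (by rw [abs_of_pos hr0]; exact hr1)
      have s3 : Summable (fun n : ℕ => ((n:ℝ)+1)^3 * r^n) := by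
        have hr' : ‖r‖ < 1 := by rw [Real.norm_eq_abs, abs_of_pos hr0]; exact hr1
        have s3 := summable_pow_mul_geometric_of_norm_lt_one (R := ℝ) 3 hr'
        have s2 := summable_pow_mul_geometric_of_norm_lt_one (R := ℝ) 2 hr'
        have s1 := summable_pow_mul_geometric_of_norm_lt_one (R := ℝ) 1 hr'
        have s0 := summable_pow_mul_geometric_of_norm_lt_one (R := ℝ) 0 hr'
        have := ((s3.add (s2.mul_left 3)).add (s1.mul_left 3)).add s0
        refine this.congr fun n => ?_
        push_cast
        ring
      refine (s3.mul_left (1/r)).congr fun n => ?_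
      field_simp
    · intro n y _
      exact (hasDerivAt_pow n y).const_mul (Scl c n)
    · intro n y hy'
      obtain ⟨hy1, hy2⟩ := hy'
      have hyr : |y| ≤ r := by rw [abs_le]; constructor <;> linarith
      rw [Real.norm_eq_abs, abs_mul, abs_mul, abs_pow, abs_of_nonneg (Scl_nonneg c hc0 n),
        abs_of_nonneg (Nat.cast_nonneg n)]
      rcases n with _ | m
      · simp [hr0.le]
      · have h1 : |y| ^ (m + 1 - 1) ≤ r ^ m := by
          simpa using pow_le_pow_left₀ (abs_nonneg y) hyr m
        have h2 : Scl c (m+1) ≤ ((m:ℝ)+1) + 1 := by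
          have := Scl_le c hc0 hc1 (m+1); push_cast at this ⊢; linarith
        have hm : (0:ℝ) ≤ (m:ℝ) := Nat.cast_nonneg m
        have hrm : (0:ℝ) ≤ r ^ m := by positivity
        have key : Scl c (m+1) * (((m:ℕ)+1 : ℝ) * |y| ^ (m + 1 - 1))
            ≤ (((m:ℝ)+1)+1)^2 * (((m:ℝ)+1)+1) / r * r ^ (m+1) := by
          have lhs_le : Scl c (m+1) * (((m:ℝ)+1) * |y| ^ (m + 1 - 1))
              ≤ ((((m:ℝ)+1)+1) * (((m:ℝ)+1))) * r ^ m := by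
            calc Scl c (m+1) * (((m:ℝ)+1) * |y| ^ (m + 1 - 1))
                ≤ ((((m:ℝ)+1)+1)) * (((m:ℝ)+1) * r ^ m) := by
                  apply mul_le_mul h2 _ (by positivity) (by positivity)
                  exact mul_le_mul le_rfl h1 (by positivity) (by positivity)
              _ = ((((m:ℝ)+1)+1) * (((m:ℝ)+1))) * r ^ m := by ring
          have rhs_eq : (((m:ℝ)+1)+1)^2 * (((m:ℝ)+1)+1) / r * r ^ (m+1)
              = (((m:ℝ)+1)+1)^2 * (((m:ℝ)+1)+1) * r ^ m := by
            rw [pow_succ]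
            field_simp
            ring
          rw [rhs_eq]
          refine lhs_le.trans ?_
          apply mul_le_mul _ le_rfl hrm (by positivity)
          nlinarith
        push_cast at key ⊢
        convert key using 2
    · exact summable_Scl_pow c hc0 hc1 (by simp)
  -- the ODE `(1-y) f' y = a f y`
  have hode : ∀ y : ℝ, |y| < 1 → (1 - y) * f' y = a * f y := by
    intro y hy
    have hsum0 : Summable (fun n : ℕ => Scl c n * y ^ n) := summable_Scl_pow c hc0 hc1 hy
    have hsumn : Summable (fun n : ℕ => (n : ℝ) * Scl c n * y ^ n) :=
      summable_n_Scl_pow c hc0 hc1 hy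
    have hterm : ∀ n : ℕ, Scl c (n+1) * (((n:ℝ)+1) * y ^ n)
        = a * (Scl c n * y ^ n) + (n:ℝ) * Scl c n * y ^ n := by
      intro n
      rw [Scl_succ]
      have hn : ((n:ℝ)+1) ≠ 0 := by positivity
      field_simp [ha]
      ring
    have hsum_deriv : Summable (fun n : ℕ => Scl c n * ((n:ℝ) * y ^ (n - 1))) := by
      rw [← summable_nat_add_iff 1]
      refine ((hsum0.mul_left a).add hsumn).congr fun n => ?_
      simp only [Nat.add_sub_cancel]
      rw [← hterm n]
      push_cast
      ring
    have hf'eq : f' y = ∑' n : ℕ, (a + n) * Scl c n * y ^ n := by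
      show (∑' n : ℕ, Scl c n * ((n : ℝ) * y ^ (n - 1))) = _
      rw [Summable.tsum_eq_zero_add hsum_deriv]
      simp only [Nat.cast_zero, zero_mul, mul_zero, zero_add]
      refine tsum_congr fun n => ?_
      simp only [Nat.add_sub_cancel]
      push_cast
      rw [hterm n]
      ring
    have h2 : y * f' y = ∑' n : ℕ, (n:ℝ) * Scl c n * y ^ n := by
      show y * (∑' n : ℕ, Scl c n * ((n : ℝ) * y ^ (n - 1))) = _
      rw [← tsum_mul_left]
      refine tsum_congr fun n => ?_
      rcases n with _ | m
      · simp
      · simp only [Nat.add_sub_cancel]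
        push_cast
        rw [pow_succ]
        ring
    have hsA : Summable (fun n : ℕ => (a + n) * Scl c n * y ^ n) :=
      ((hsum0.mul_left a).add hsumn).congr fun n => by ring
    calc (1 - y) * f' y = f' y - y * f' y := by ring
      _ = (∑' n : ℕ, (a + n) * Scl c n * y ^ n) - ∑' n : ℕ, (n:ℝ) * Scl c n * y ^ n := by
          rw [h2, hf'eq]
      _ = ∑' n : ℕ, ((a + n) * Scl c n * y ^ n - (n:ℝ) * Scl c n * y ^ n) := by
          rw [Summable.tsum_sub hsA hsumn]
      _ = ∑' n : ℕ, a * (Scl c n * y ^ n) := tsum_congr fun n => by ring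
      _ = a * f y := tsum_mul_left
  -- `(1-y)^a * f y` is constant on `[0, x]`
  set F : ℝ → ℝ := fun z => (1 - z) ^ a * f z with hF
  have hFd : ∀ y ∈ Set.Icc (0:ℝ) x, HasDerivAt F 0 y := by
    intro y hy
    obtain ⟨hy0, hyx⟩ := hy
    have h1y : 0 < 1 - y := by linarith
    have hyabs : |y| < 1 := by rw [abs_of_nonneg hy0]; linarith
    have hmem : y ∈ Set.Ioo (-r) r := ⟨by linarith, by linarith⟩
    have hd1 : HasDerivAt (fun z : ℝ => (1 - z) ^ a) (-1 * a * (1 - y) ^ (a - 1)) y := by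
      have hbase : HasDerivAt (fun z : ℝ => 1 - z) (-1) y := by
        simpa using (hasDerivAt_id y).const_sub 1
      exact hbase.rpow_const (Or.inl h1y.ne')
    have hd2 := hderiv y hmem
    have hd := hd1.mul hd2
    have hz : -1 * a * (1 - y) ^ (a - 1) * f y + (1 - y) ^ a * f' y = 0 := by
      have e1 : (1 - y) ^ a = (1 - y) ^ (a - 1) * (1 - y) := by
        rw [← Real.rpow_add_one h1y.ne' (a - 1)]
        norm_num
      have e2 := hode y hyabs
      rw [e1]
      linear_combination ((1 - y) ^ (a - 1)) * e2
    rw [hz] at hd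
    exact hd
  have hconst := constant_of_has_deriv_right_zero
    (f := F) (a := 0) (b := x)
    (fun y hy => (hFd y hy).continuousAt.continuousWithinAt)
    (fun y hy => ((hFd y (Set.Ico_subset_Icc_self hy)).hasDerivWithinAt))
    x (Set.right_mem_Icc.2 hx0)
  have hf0 : f 0 = 1 := by
    show (∑' n : ℕ, Scl c n * (0:ℝ) ^ n) = 1
    rw [tsum_eq_single 0 (fun b hb => by simp [zero_pow hb])]
    simp [Scl_zero]
  have hF0 : F 0 = 1 := by
    rw [hF]
    simp only [sub_zero, Real.one_rpow, one_mul]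
    exact hf0
  have hFx : (1 - x) ^ a * f x = 1 := by
    have := hconst
    rw [hF0] at this
    exact this
  have h1x : (0:ℝ) < 1 - x := by linarith
  have hfx : f x = (1 - x) ^ (-a) := by
    rw [Real.rpow_neg h1x.le]
    field_simp
    have hpos : (0:ℝ) < (1 - x) ^ a := Real.rpow_pos_of_pos h1x a
    field_simp at hFx ⊢
    linarith [hFx]
  have hsumx : Summable (fun n : ℕ => Scl c n * x ^ n) :=
    summable_Scl_pow c hc0 hc1 (by rw [abs_of_nonneg hx0]; exact hx1)
  have := hsumx.hasSum
  rw [show (∑' n : ℕ, Scl c n * x ^ n) = (1 - x) ^ (-(2*c)) from hfx] at this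
  exact this

end MTree

namespace MTree

lemma abs_piStar_le_one : ∀ (tr : MTree) (φ : ℕ → ℝ) (j : ℕ), |tr.piStar φ j| ≤ 1
  | .leaf, φ, j => by simp [piStar]
  | .node a b, φ, j => by
    show |if j < a.leaves then _ else _| ≤ 1
    split_ifs with h
    · rw [abs_mul]
      exact mul_le_one₀ (abs_piStar_le_one a φ j) (abs_nonneg _) (abs_cos_le_one _)
    · rw [abs_mul]
      exact mul_le_one₀ (abs_piStar_le_one b _ _) (abs_nonneg _) (abs_sin_le_one _)

lemma measurable_piStar : ∀ (tr : MTree) (j : ℕ),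
    Measurable (fun φ : ℕ → ℝ => tr.piStar φ j)
  | .leaf, j => measurable_const
  | .node a b, j => by
    by_cases h : j < a.leaves
    · have : (fun φ : ℕ → ℝ => (MTree.node a b).piStar φ j)
          = fun φ => a.piStar φ j * Real.cos (φ ((MTree.node a b).leaves - 2)) := by
        funext φ; show (if j < a.leaves then _ else _) = _; rw [if_pos h]
      rw [this]
      exact (measurable_piStar a j).mul
        (Real.measurable_cos.comp (measurable_pi_apply _))
    · have : (fun φ : ℕ → ℝ => (MTree.node a b).piStar φ j)
          = fun φ => b.piStar (fun i => φ (i + (a.leaves - 1))) (j - a.leaves) *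
              Real.sin (φ ((MTree.node a b).leaves - 2)) := by
        funext φ; show (if j < a.leaves then _ else _) = _; rw [if_neg h]
      rw [this]
      have h1 : Measurable (fun (φ : ℕ → ℝ) (i : ℕ) => φ (i + (a.leaves - 1))) :=
        measurable_pi_lambda _ (fun i => measurable_pi_apply _)
      exact ((measurable_piStar b (j - a.leaves)).comp h1).mul
        (Real.measurable_sin.comp (measurable_pi_apply _))

lemma piStar_congr : ∀ (tr : MTree) (φ ψ : ℕ → ℝ),
    (∀ i, i < tr.leaves - 1 → φ i = ψ i) → ∀ j, tr.piStar φ j = tr.piStar ψ j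
  | .leaf, _, _, _, _ => rfl
  | .node a b, φ, ψ, h, j => by
    have ha := one_le_leaves a; have hb := one_le_leaves b
    have hlv : (MTree.node a b).leaves = a.leaves + b.leaves := rfl
    have hang : φ ((MTree.node a b).leaves - 2) = ψ ((MTree.node a b).leaves - 2) :=
      h _ (by rw [hlv]; omega)
    show (if j < a.leaves then _ else _) = (if j < a.leaves then _ else _)
    split_ifs with hj
    · rw [piStar_congr a φ ψ (fun i hi => h i (by rw [hlv]; omega)) j, hang]
    · rw [piStar_congr b _ _ (fun i hi => h (i + (a.leaves - 1)) (by rw [hlv]; omega))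
        (j - a.leaves), hang]

lemma piStar_node (a b : MTree) (φ : ℕ → ℝ) (j : ℕ) :
    (MTree.node a b).piStar φ j =
      if j < a.leaves then a.piStar φ j * Real.cos (φ (a.leaves + b.leaves - 2))
      else b.piStar (fun i => φ (i + (a.leaves - 1))) (j - a.leaves) *
        Real.sin (φ (a.leaves + b.leaves - 2)) := rfl

lemma sum_abs_node (s : ℝ) (hs : 0 ≤ s) (a b : MTree) (φ : ℕ → ℝ) :
    ∑ j ∈ Finset.range (a.leaves + b.leaves), |(MTree.node a b).piStar φ j| ^ s
      = (∑ j ∈ Finset.range a.leaves, |a.piStar φ j| ^ s) *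
          |Real.cos (φ (a.leaves + b.leaves - 2))| ^ s
        + (∑ j ∈ Finset.range b.leaves,
            |b.piStar (fun i => φ (i + (a.leaves - 1))) j| ^ s) *
          |Real.sin (φ (a.leaves + b.leaves - 2))| ^ s := by
  rw [Finset.sum_range_add]
  congr 1
  · rw [Finset.sum_mul]
    refine Finset.sum_congr rfl fun j hj => ?_
    have hj' := Finset.mem_range.1 hj
    rw [piStar_node, if_pos hj', abs_mul, Real.mul_rpow (abs_nonneg _) (abs_nonneg _)]
  · rw [Finset.sum_mul]
    refine Finset.sum_congr rfl fun i hi => ?_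
    rw [piStar_node, if_neg (by omega), Nat.add_sub_cancel_left, abs_mul,
      Real.mul_rpow (abs_nonneg _) (abs_nonneg _)]

end MTree

section Equivs

open MeasureTheory

noncomputable def splitEquiv (p q : ℕ) : ((Fin p → ℝ) × (Fin q → ℝ)) ≃ᵐ (Fin (p + q) → ℝ) :=
  (MeasurableEquiv.sumPiEquivProdPi (fun _ : Fin p ⊕ Fin q => ℝ)).symm.trans
    (MeasurableEquiv.piCongrLeft (fun _ : Fin (p + q) => ℝ) finSumFinEquiv)

lemma splitEquiv_left (p q : ℕ) (u : Fin p → ℝ) (v : Fin q → ℝ) (i : Fin p) :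
    splitEquiv p q (u, v) (Fin.castAdd q i) = u i := by
  show (MeasurableEquiv.piCongrLeft (fun _ : Fin (p + q) => ℝ) finSumFinEquiv)
      ((MeasurableEquiv.sumPiEquivProdPi (fun _ : Fin p ⊕ Fin q => ℝ)).symm (u, v))
      (Fin.castAdd q i) = u i
  rw [show Fin.castAdd q i = finSumFinEquiv (Sum.inl i) from rfl]
  rw [show ⇑(MeasurableEquiv.piCongrLeft (fun _ : Fin (p + q) => ℝ) finSumFinEquiv)
    = ⇑(Equiv.piCongrLeft (fun _ : Fin (p + q) => ℝ) finSumFinEquiv) from rfl]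
  rw [Equiv.piCongrLeft_apply_apply]
  rfl

lemma splitEquiv_right (p q : ℕ) (u : Fin p → ℝ) (v : Fin q → ℝ) (i : Fin q) :
    splitEquiv p q (u, v) (Fin.natAdd p i) = v i := by
  show (MeasurableEquiv.piCongrLeft (fun _ : Fin (p + q) => ℝ) finSumFinEquiv)
      ((MeasurableEquiv.sumPiEquivProdPi (fun _ : Fin p ⊕ Fin q => ℝ)).symm (u, v))
      (Fin.natAdd p i) = v i
  rw [show Fin.natAdd p i = finSumFinEquiv (Sum.inr i) from rfl]
  rw [show ⇑(MeasurableEquiv.piCongrLeft (fun _ : Fin (p + q) => ℝ) finSumFinEquiv)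
    = ⇑(Equiv.piCongrLeft (fun _ : Fin (p + q) => ℝ) finSumFinEquiv) from rfl]
  rw [Equiv.piCongrLeft_apply_apply]
  rfl

lemma splitEquiv_mp (p q : ℕ) (βm : Measure ℝ) [IsProbabilityMeasure βm] :
    MeasurePreserving (splitEquiv p q)
      ((Measure.pi fun _ : Fin p => βm).prod (Measure.pi fun _ : Fin q => βm))
      (Measure.pi fun _ : Fin (p + q) => βm) :=
  (measurePreserving_piCongrLeft (fun _ : Fin (p + q) => βm) finSumFinEquiv).comp
    (measurePreserving_sumPiEquivProdPi_symm (fun _ : Fin p ⊕ Fin q => βm))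

noncomputable def snocEquiv (m : ℕ) : (ℝ × (Fin m → ℝ)) ≃ᵐ (Fin (m + 1) → ℝ) :=
  (MeasurableEquiv.piFinSuccAbove (fun _ : Fin (m + 1) => ℝ) (Fin.last m)).symm

lemma snocEquiv_last (m : ℕ) (x : ℝ) (w : Fin m → ℝ) :
    snocEquiv m (x, w) (Fin.last m) = x := by
  show (MeasurableEquiv.piFinSuccAbove (fun _ : Fin (m + 1) => ℝ) (Fin.last m)).symm
    (x, w) (Fin.last m) = x
  rw [MeasurableEquiv.piFinSuccAbove_symm_apply]
  rw [Fin.insertNthEquiv_apply]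
  exact Fin.insertNth_apply_same _ _ _

lemma snocEquiv_castSucc (m : ℕ) (x : ℝ) (w : Fin m → ℝ) (i : Fin m) :
    snocEquiv m (x, w) (Fin.castSucc i) = w i := by
  show (MeasurableEquiv.piFinSuccAbove (fun _ : Fin (m + 1) => ℝ) (Fin.last m)).symm
    (x, w) (Fin.castSucc i) = w i
  rw [MeasurableEquiv.piFinSuccAbove_symm_apply]
  rw [Fin.insertNthEquiv_apply]
  rw [← congrFun (Fin.succAbove_last (n := m)) i]
  exact Fin.insertNth_apply_succAbove _ _ _ _

lemma snocEquiv_mp (m : ℕ) (βm : Measure ℝ) [IsProbabilityMeasure βm] :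
    MeasurePreserving (snocEquiv m)
      (βm.prod (Measure.pi fun _ : Fin m => βm))
      (Measure.pi fun _ : Fin (m + 1) => βm) :=
  MeasurePreserving.symm _
    (measurePreserving_piFinSuccAbove (fun _ : Fin (m + 1) => βm) (Fin.last m))

noncomputable def fullEquiv (p q : ℕ) :
    (ℝ × ((Fin p → ℝ) × (Fin q → ℝ))) ≃ᵐ (Fin (p + q + 1) → ℝ) :=
  (MeasurableEquiv.prodCongr (MeasurableEquiv.refl ℝ) (splitEquiv p q)).trans
    (snocEquiv (p + q))

lemma fullEquiv_mp (p q : ℕ) (βm : Measure ℝ) [IsProbabilityMeasure βm] :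
    MeasurePreserving (fullEquiv p q)
      (βm.prod ((Measure.pi fun _ : Fin p => βm).prod (Measure.pi fun _ : Fin q => βm)))
      (Measure.pi fun _ : Fin (p + q + 1) => βm) :=
  (snocEquiv_mp (p + q) βm).comp
    ((MeasurePreserving.id βm).prod (splitEquiv_mp p q βm))

lemma fullEquiv_last (p q : ℕ) (x : ℝ) (u : Fin p → ℝ) (v : Fin q → ℝ) :
    fullEquiv p q (x, (u, v)) (Fin.last (p + q)) = x :=
  snocEquiv_last _ _ _

lemma fullEquiv_left (p q : ℕ) (x : ℝ) (u : Fin p → ℝ) (v : Fin q → ℝ) (i : Fin p) :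
    fullEquiv p q (x, (u, v)) (Fin.castSucc (Fin.castAdd q i)) = u i := by
  show snocEquiv (p + q) (x, splitEquiv p q (u, v)) (Fin.castSucc (Fin.castAdd q i)) = u i
  rw [snocEquiv_castSucc, splitEquiv_left]

lemma fullEquiv_right (p q : ℕ) (x : ℝ) (u : Fin p → ℝ) (v : Fin q → ℝ) (i : Fin q) :
    fullEquiv p q (x, (u, v)) (Fin.castSucc (Fin.natAdd p i)) = v i := by
  show snocEquiv (p + q) (x, splitEquiv p q (u, v)) (Fin.castSucc (Fin.natAdd p i)) = v i
  rw [snocEquiv_castSucc, splitEquiv_right]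

end Equivs

namespace MTree

open MeasureTheory

variable {βm : Measure ℝ} [IsProbabilityMeasure βm]

lemma rpow_abs_piStar_le_one {s : ℝ} (hs : 0 ≤ s) (tr : MTree) (φ : ℕ → ℝ) (j : ℕ) :
    |tr.piStar φ j| ^ s ≤ 1 :=
  Real.rpow_le_one (abs_nonneg _) (abs_piStar_le_one tr φ j) hs

lemma measurable_ext (p : ℕ) :
    Measurable (fun (u : Fin p → ℝ) (i : ℕ) => if h : i < p then u ⟨i, h⟩ else 0) := by
  refine measurable_pi_lambda _ fun i => ?_
  by_cases h : i < p
  · simpa [h] using measurable_pi_apply (⟨i, h⟩ : Fin p)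
  · simpa [h] using measurable_const

lemma measurable_A {s : ℝ} (hs : 0 < s) (tr : MTree) (p k : ℕ) :
    Measurable (fun (u : Fin p → ℝ) => ∑ j ∈ Finset.range k,
      |tr.piStar (fun i => if h : i < p then u ⟨i, h⟩ else 0) j| ^ s) := by
  refine Finset.measurable_sum _ fun j _ => ?_
  exact (Real.continuous_rpow_const hs.le).measurable.comp
    (((measurable_piStar tr j).comp (measurable_ext p)).abs)

lemma A_nonneg {s : ℝ} (tr : MTree) (p k : ℕ) (u : Fin p → ℝ) :
    0 ≤ ∑ j ∈ Finset.range k, |tr.piStar (fun i => if h : i < p then u ⟨i, h⟩ else 0) j| ^ s :=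
  Finset.sum_nonneg fun j _ => Real.rpow_nonneg (abs_nonneg _) s

lemma A_le {s : ℝ} (hs : 0 ≤ s) (tr : MTree) (p k : ℕ) (u : Fin p → ℝ) :
    (∑ j ∈ Finset.range k, |tr.piStar (fun i => if h : i < p then u ⟨i, h⟩ else 0) j| ^ s)
      ≤ (k : ℝ) := by
  calc (∑ j ∈ Finset.range k, |tr.piStar (fun i => if h : i < p then u ⟨i, h⟩ else 0) j| ^ s)
      ≤ ∑ _j ∈ Finset.range k, (1:ℝ) :=
        Finset.sum_le_sum fun j _ => rpow_abs_piStar_le_one hs tr _ j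
    _ = (k : ℝ) := by simp

lemma measurable_abs_cos_rpow {s : ℝ} (hs : 0 < s) :
    Measurable (fun x : ℝ => |Real.cos x| ^ s) :=
  ((Real.continuous_rpow_const hs.le).comp continuous_cos.abs).measurable

lemma measurable_abs_sin_rpow {s : ℝ} (hs : 0 < s) :
    Measurable (fun x : ℝ => |Real.sin x| ^ s) :=
  ((Real.continuous_rpow_const hs.le).comp continuous_sin.abs).measurable

lemma integral_piStar (s c : ℝ) (hs : 0 < s)
    (hcos : ∫ x, |Real.cos x| ^ s ∂βm = c)
    (hsin : ∫ x, |Real.sin x| ^ s ∂βm = c) :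
    ∀ (tr : MTree) (n : ℕ), tr.leaves = n + 1 →
      ∫ φ : Fin n → ℝ, (∑ j ∈ Finset.range (n + 1),
          |tr.piStar (fun i => if h : i < n then φ ⟨i, h⟩ else 0) j| ^ s)
        ∂(Measure.pi fun _ : Fin n => βm) = esum c tr := by
  intro tr
  induction tr with
  | leaf =>
    intro n h
    have hn : n = 0 := by simp [leaves] at h; omega
    subst hn
    have : ∀ φ : Fin 0 → ℝ, (∑ j ∈ Finset.range 1,
        |MTree.leaf.piStar (fun i => if h : i < 0 then φ ⟨i, h⟩ else 0) j| ^ s) = 1 := by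
      intro φ
      simp [piStar]
    rw [integral_congr_ae (Filter.Eventually.of_forall this)]
    simp [esum]
  | node a b iha ihb =>
    intro n h
    obtain ⟨p, ha'⟩ : ∃ p, a.leaves = p + 1 := ⟨a.leaves - 1, by have := one_le_leaves a; omega⟩
    obtain ⟨q, hb'⟩ : ∃ q, b.leaves = q + 1 := ⟨b.leaves - 1, by have := one_le_leaves b; omega⟩
    have hn : n = p + q + 1 := by simp only [leaves] at h; omega
    subst hn
    set pp := Measure.pi fun _ : Fin p => βm with hpp
    set pq := Measure.pi fun _ : Fin q => βm with hpq
    set A : (Fin p → ℝ) → ℝ := fun u => ∑ j ∈ Finset.range (p + 1),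
      |a.piStar (fun i => if h : i < p then u ⟨i, h⟩ else 0) j| ^ s with hA
    set B : (Fin q → ℝ) → ℝ := fun v => ∑ j ∈ Finset.range (q + 1),
      |b.piStar (fun i => if h : i < q then v ⟨i, h⟩ else 0) j| ^ s with hB
    -- pointwise identity
    have hpt : ∀ z : ℝ × ((Fin p → ℝ) × (Fin q → ℝ)),
        (∑ j ∈ Finset.range (p + q + 1 + 1),
          |(MTree.node a b).piStar
            (fun i => if h : i < p + q + 1 then fullEquiv p q z ⟨i, h⟩ else 0) j| ^ s)
        = A z.2.1 * |Real.cos z.1| ^ s + B z.2.2 * |Real.sin z.1| ^ s := by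
      rintro ⟨x, u, v⟩
      set φ : ℕ → ℝ := fun i => if h : i < p + q + 1 then fullEquiv p q (x, (u, v)) ⟨i, h⟩ else 0 with hφ
      have hrange : p + q + 1 + 1 = a.leaves + b.leaves := by omega
      rw [hrange, sum_abs_node s hs.le a b φ]
      have hangle : φ (a.leaves + b.leaves - 2) = x := by
        have hidx : a.leaves + b.leaves - 2 = p + q := by omega
        rw [hidx, hφ]
        have hlt : p + q < p + q + 1 := by omega
        show (if h : p + q < p + q + 1 then fullEquiv p q (x, (u, v)) ⟨p + q, h⟩ else 0) = x
        rw [dif_pos hlt]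
        have : (⟨p + q, hlt⟩ : Fin (p + q + 1)) = Fin.last (p + q) := rfl
        rw [this]
        exact fullEquiv_last p q x u v
      have hleft : ∀ i, i < a.leaves - 1 → φ i = (if h : i < p then u ⟨i, h⟩ else 0) := by
        intro i hi
        have hip : i < p := by omega
        have hlt : i < p + q + 1 := by omega
        rw [hφ]
        show (if h : i < p + q + 1 then fullEquiv p q (x, (u, v)) ⟨i, h⟩ else 0) = _
        rw [dif_pos hlt, dif_pos hip]
        have : (⟨i, hlt⟩ : Fin (p + q + 1))
            = Fin.castSucc (Fin.castAdd q ⟨i, hip⟩) := rfl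
        rw [this]
        exact fullEquiv_left p q x u v _
      have hright : ∀ i, i < b.leaves - 1 →
          φ (i + (a.leaves - 1)) = (if h : i < q then v ⟨i, h⟩ else 0) := by
        intro i hi
        have hiq : i < q := by omega
        have hlt : i + (a.leaves - 1) < p + q + 1 := by omega
        rw [hφ]
        show (if h : i + (a.leaves - 1) < p + q + 1 then
          fullEquiv p q (x, (u, v)) ⟨i + (a.leaves - 1), h⟩ else 0) = _
        rw [dif_pos hlt, dif_pos hiq]
        have : (⟨i + (a.leaves - 1), hlt⟩ : Fin (p + q + 1))
            = Fin.castSucc (Fin.natAdd p ⟨i, hiq⟩) := by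
          apply Fin.ext
          simp [ha']
          omega
        rw [this]
        exact fullEquiv_right p q x u v _
      have hsumA : (∑ j ∈ Finset.range a.leaves, |a.piStar φ j| ^ s) = A u := by
        rw [hA, ha']
        refine Finset.sum_congr rfl fun j _ => ?_
        rw [piStar_congr a φ _ (fun i hi => hleft i hi) j]
      have hsumB : (∑ j ∈ Finset.range b.leaves,
          |b.piStar (fun i => φ (i + (a.leaves - 1))) j| ^ s) = B v := by
        rw [hB, hb']
        refine Finset.sum_congr rfl fun j _ => ?_
        rw [piStar_congr b _ _ (fun i hi => hright i hi) j]
      rw [hangle, hsumA, hsumB]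
    -- transfer the integral through the equivalence
    have hmp := fullEquiv_mp p q βm
    rw [← hmp.map_eq, integral_map_equiv]
    rw [integral_congr_ae (Filter.Eventually.of_forall hpt)]
    -- integrability
    have measA : Measurable A := measurable_A hs a p (p + 1)
    have measB : Measurable B := measurable_A hs b q (q + 1)
    have measF : Measurable (fun z : ℝ × ((Fin p → ℝ) × (Fin q → ℝ)) =>
        A z.2.1 * |Real.cos z.1| ^ s + B z.2.2 * |Real.sin z.1| ^ s) := by
      exact ((measA.comp (measurable_fst.comp measurable_snd)).mul
          ((measurable_abs_cos_rpow hs).comp measurable_fst)).add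
        ((measB.comp (measurable_snd.comp measurable_snd)).mul
          ((measurable_abs_sin_rpow hs).comp measurable_fst))
    have hAb : ∀ u, 0 ≤ A u := fun u => A_nonneg a p (p + 1) u
    have hBb : ∀ v, 0 ≤ B v := fun v => A_nonneg b q (q + 1) v
    have hAle : ∀ u, A u ≤ (p + 1 : ℝ) := by
      intro u
      have := A_le hs.le a p (p + 1) u
      push_cast at this ⊢
      exact this
    have hBle : ∀ v, B v ≤ (q + 1 : ℝ) := by
      intro v
      have := A_le hs.le b q (q + 1) v
      push_cast at this ⊢
      exact this
    have hcos1 : ∀ x : ℝ, |Real.cos x| ^ s ≤ 1 :=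
      fun x => Real.rpow_le_one (abs_nonneg _) (abs_cos_le_one x) hs.le
    have hsin1 : ∀ x : ℝ, |Real.sin x| ^ s ≤ 1 :=
      fun x => Real.rpow_le_one (abs_nonneg _) (abs_sin_le_one x) hs.le
    have hcosn : ∀ x : ℝ, 0 ≤ |Real.cos x| ^ s := fun x => Real.rpow_nonneg (abs_nonneg _) s
    have hsinn : ∀ x : ℝ, 0 ≤ |Real.sin x| ^ s := fun x => Real.rpow_nonneg (abs_nonneg _) s
    have intF : Integrable (fun z : ℝ × ((Fin p → ℝ) × (Fin q → ℝ)) =>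
        A z.2.1 * |Real.cos z.1| ^ s + B z.2.2 * |Real.sin z.1| ^ s)
        (βm.prod (pp.prod pq)) := by
      refine Integrable.mono' (integrable_const ((p + 1 : ℝ) + (q + 1 : ℝ)))
        measF.aestronglyMeasurable (Filter.Eventually.of_forall fun z => ?_)
      rw [Real.norm_eq_abs, abs_of_nonneg (by
        exact add_nonneg (mul_nonneg (hAb _) (hcosn _)) (mul_nonneg (hBb _) (hsinn _)))]
      have h1 : A z.2.1 * |Real.cos z.1| ^ s ≤ (p + 1 : ℝ) :=
        le_trans (mul_le_of_le_one_right (hAb _) (hcos1 _)) (hAle _)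
      have h2 : B z.2.2 * |Real.sin z.1| ^ s ≤ (q + 1 : ℝ) :=
        le_trans (mul_le_of_le_one_right (hBb _) (hsin1 _)) (hBle _)
      linarith
    rw [integral_prod _ intF]
    -- inner integral
    have intAfst : Integrable (fun w : (Fin p → ℝ) × (Fin q → ℝ) => A w.1) (pp.prod pq) := by
      refine Integrable.mono' (integrable_const (p + 1 : ℝ))
        (measA.comp measurable_fst).aestronglyMeasurable
        (Filter.Eventually.of_forall fun w => ?_)
      rw [Real.norm_eq_abs, abs_of_nonneg (hAb _)]
      exact hAle _
    have intBsnd : Integrable (fun w : (Fin p → ℝ) × (Fin q → ℝ) => B w.2) (pp.prod pq) := by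
      refine Integrable.mono' (integrable_const (q + 1 : ℝ))
        (measB.comp measurable_snd).aestronglyMeasurable
        (Filter.Eventually.of_forall fun w => ?_)
      rw [Real.norm_eq_abs, abs_of_nonneg (hBb _)]
      exact hBle _
    have hIA : ∫ w : (Fin p → ℝ) × (Fin q → ℝ), A w.1 ∂(pp.prod pq) = esum c a := by
      rw [integral_prod _ intAfst]
      simp only [integral_const, measure_univ, ENNReal.toReal_one, probReal_univ, one_smul]
      exact iha p ha'
    have hIB : ∫ w : (Fin p → ℝ) × (Fin q → ℝ), B w.2 ∂(pp.prod pq) = esum c b := by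
      rw [integral_prod _ intBsnd]
      have : ∀ u : Fin p → ℝ, ∫ v : Fin q → ℝ, B v ∂pq = esum c b := fun u => ihb q hb'
      rw [integral_congr_ae (Filter.Eventually.of_forall this)]
      simp only [integral_const, measure_univ, ENNReal.toReal_one, probReal_univ, one_smul]
    have hinner : ∀ x : ℝ,
        ∫ w : (Fin p → ℝ) × (Fin q → ℝ),
          (A w.1 * |Real.cos x| ^ s + B w.2 * |Real.sin x| ^ s) ∂(pp.prod pq)
        = esum c a * |Real.cos x| ^ s + esum c b * |Real.sin x| ^ s := by
      intro x
      rw [integral_add (intAfst.mul_const _) (intBsnd.mul_const _)]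
      rw [integral_mul_const, integral_mul_const, hIA, hIB]
    rw [integral_congr_ae (Filter.Eventually.of_forall hinner)]
    -- outer integral
    have intcos : Integrable (fun x : ℝ => |Real.cos x| ^ s) βm := by
      refine Integrable.mono' (integrable_const (1 : ℝ))
        (measurable_abs_cos_rpow hs).aestronglyMeasurable
        (Filter.Eventually.of_forall fun x => ?_)
      rw [Real.norm_eq_abs, abs_of_nonneg (hcosn _)]
      exact hcos1 _
    have intsin : Integrable (fun x : ℝ => |Real.sin x| ^ s) βm := by
      refine Integrable.mono' (integrable_const (1 : ℝ))
        (measurable_abs_sin_rpow hs).aestronglyMeasurable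
        (Filter.Eventually.of_forall fun x => ?_)
      rw [Real.norm_eq_abs, abs_of_nonneg (hsinn _)]
      exact hsin1 _
    rw [integral_add (intcos.const_mul _) (intsin.const_mul _)]
    rw [integral_const_mul, integral_const_mul, hcos, hsin]
    show esum c a * c + esum c b * c = c * (esum c a + esum c b)
    ring

end MTree

/-- The expected value `E_t[Σ_{j=1}^ν |π_{j,ν}|^s] = exp(-(1 - 2 l_s) t)`:
since `ν`, the tree chain and the i.i.d. angles are independent, with
`P[ν = n] = e^{-t}(1-e^{-t})^{n-1}`, `P[τ_n = t_n] = p_n(t_n)` and angle law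
`β`, the expectation is written as the corresponding series of integrals. -/
theorem expected_sum_pi_pow
    (t s : ℝ) (ht : 0 < t) (hs : 0 < s)
    (β : Measure ℝ) [IsProbabilityMeasure β]
    (hβsupp : β (Set.Icc 0 π) = 1)
    (l : ℝ)
    (hsin : ∫ φ, Real.sin φ ^ s ∂β = l)
    (hcos : ∫ φ, |Real.cos φ| ^ s ∂β = l) :
    ∑' n : ℕ, Real.exp (-t) * (1 - Real.exp (-t)) ^ n *
      ∑' tr : {tr : MTree // tr.leaves = n + 1},
        (tr : MTree).weight *
          ∫ φ : Fin n → ℝ,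
            (∑ j ∈ Finset.range (n + 1),
              |MTree.piStar tr (fun i => if h : i < n then φ ⟨i, h⟩ else 0) j| ^ s)
            ∂(Measure.pi fun _ : Fin n => β)
      = Real.exp (-(1 - 2 * l) * t) := by
  -- the integrals of |cos|^s and |sin|^s
  have hcosn : ∀ x : ℝ, 0 ≤ |Real.cos x| ^ s := fun x => Real.rpow_nonneg (abs_nonneg _) s
  have hcos1 : ∀ x : ℝ, |Real.cos x| ^ s ≤ 1 :=
    fun x => Real.rpow_le_one (abs_nonneg _) (abs_cos_le_one x) hs.le
  have intcos : Integrable (fun x : ℝ => |Real.cos x| ^ s) β := by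
    refine Integrable.mono' (integrable_const (1 : ℝ))
      (MTree.measurable_abs_cos_rpow hs).aestronglyMeasurable
      (Filter.Eventually.of_forall fun x => ?_)
    rw [Real.norm_eq_abs, abs_of_nonneg (hcosn _)]
    exact hcos1 _
  have hl0 : 0 ≤ l := by
    rw [← hcos]
    exact integral_nonneg fun x => hcosn x
  have hl1 : l ≤ 1 := by
    rw [← hcos]
    calc ∫ x, |Real.cos x| ^ s ∂β ≤ ∫ _x, (1:ℝ) ∂β :=
          integral_mono intcos (integrable_const 1) fun x => hcos1 x
      _ = 1 := by simp
  -- a.e. membership in [0, π]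
  have hcompl : β (Set.Icc 0 π)ᶜ = 0 := by
    rw [measure_compl measurableSet_Icc (measure_ne_top β _), hβsupp, measure_univ]
    simp
  have hae : ∀ᵐ x ∂β, x ∈ Set.Icc 0 π := by
    rw [MeasureTheory.ae_iff]
    have hset : {x : ℝ | ¬ x ∈ Set.Icc 0 π} = (Set.Icc 0 π)ᶜ := rfl
    rw [hset]
    exact hcompl
  have hsin' : ∫ x, |Real.sin x| ^ s ∂β = l := by
    rw [← hsin]
    apply integral_congr_ae
    filter_upwards [hae] with x hx
    obtain ⟨h0, h1⟩ := hx
    rw [abs_of_nonneg (Real.sin_nonneg_of_nonneg_of_le_pi h0 h1)]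
  -- the inner sum over trees
  have hinner : ∀ n : ℕ,
      (∑' tr : {tr : MTree // tr.leaves = n + 1},
        (tr : MTree).weight *
          ∫ φ : Fin n → ℝ,
            (∑ j ∈ Finset.range (n + 1),
              |MTree.piStar tr (fun i => if h : i < n then φ ⟨i, h⟩ else 0) j| ^ s)
            ∂(Measure.pi fun _ : Fin n => β)) = MTree.Scl l n := by
    intro n
    rw [← MTree.Tsum_eq_Scl]
    unfold MTree.Tsum
    apply tsum_congr
    rintro ⟨tr, htr⟩
    rw [MTree.integral_piStar s l hs hcos hsin' tr n htr]
  calc ∑' n : ℕ, Real.exp (-t) * (1 - Real.exp (-t)) ^ n *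
      ∑' tr : {tr : MTree // tr.leaves = n + 1},
        (tr : MTree).weight *
          ∫ φ : Fin n → ℝ,
            (∑ j ∈ Finset.range (n + 1),
              |MTree.piStar tr (fun i => if h : i < n then φ ⟨i, h⟩ else 0) j| ^ s)
            ∂(Measure.pi fun _ : Fin n => β)
      = ∑' n : ℕ, Real.exp (-t) *
          (MTree.Scl l n * (1 - Real.exp (-t)) ^ n) := by
        refine tsum_congr fun n => ?_
        rw [hinner n]
        ring
    _ = Real.exp (-(1 - 2 * l) * t) := by
        have hx0 : 0 ≤ 1 - Real.exp (-t) := by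
          have : Real.exp (-t) ≤ Real.exp 0 := Real.exp_le_exp.2 (by linarith)
          rw [Real.exp_zero] at this
          linarith
        have hx1 : 1 - Real.exp (-t) < 1 := by
          have := Real.exp_pos (-t)
          linarith
        have hsum := (MTree.hasSum_Scl l hl0 hl1 (1 - Real.exp (-t)) hx0 hx1).mul_left
          (Real.exp (-t))
        rw [hsum.tsum_eq]
        rw [show (1 - (1 - Real.exp (-t))) = Real.exp (-t) by ring]
        rw [← Real.exp_mul]
        rw [← Real.exp_add]
        congr 1
        ring
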